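/- arXiv:1611.01267 — 4 statements merged into one kernel-verified Lean document; each statement's English description precedes it below -/
import Mathlib

section
/- Let f be a non-constant rational function and suppose there is a value a₁ ∈ ℂ∪{∞} such that there is exactly one point z₁ ∈ ℂ with f(z₁) = a₁. Let U be the union of {a₁} and the set of all values that f, as a function on the complex plane ℂ, omits. Let c₁, …, c_r be the totally ramified values of f not lying in U, and for each j let m_j ≥ 2 be an integer such that every c_j-point of f has multiplicity at least m_j. Then |U| + Σ_{j=1}^{r} (1 − 1/m_j) ≤ 2. -/
open Filter Topology
open scoped Classical

/-- The Riemann sphere `ℂ ∪ {∞}`. -/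
inductive CSphere : Type where
  | finite (z : ℂ) : CSphere
  | infty : CSphere

namespace CSphere

/-- Reciprocal of a complex number, landing on the Riemann sphere (`1/0 = ∞`). -/
noncomputable def sphInv (w : ℂ) : CSphere :=
  if w = 0 then infty else finite w⁻¹

/-- Finite part of a point of the sphere (junk value `0` at `∞`). -/
def finPart : CSphere → ℂ
  | finite w => w
  | infty => 0

/-- Modulus of a point of the sphere (junk value `0` at `∞`). -/
noncomputable def sphAbs : CSphere → ℝ
  | finite w => ‖w‖
  | infty => 0

/-- The chordal (spherical) distance on the Riemann sphere. -/
noncomputable def sphDist : CSphere → CSphere → ℝ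
  | finite z, finite w => 2 * ‖z - w‖ / (Real.sqrt (1 + ‖z‖ ^ 2) * Real.sqrt (1 + ‖w‖ ^ 2))
  | finite z, infty => 2 / Real.sqrt (1 + ‖z‖ ^ 2)
  | infty, finite w => 2 / Real.sqrt (1 + ‖w‖ ^ 2)
  | infty, infty => 0

end CSphere

open CSphere

/-- A sphere-valued function is meromorphic at a point `z` if, in a neighbourhood of `z`,
it is given by an analytic function, or is the reciprocal of an analytic function that is
not identically zero near `z` (so that a pole is an isolated point where the value is `∞`). -/
def MeroAt (f : ℂ → CSphere) (z : ℂ) : Prop :=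
  (∃ g : ℂ → ℂ, AnalyticAt ℂ g z ∧ ∀ᶠ w in 𝓝 z, f w = finite (g w)) ∨
  (∃ g : ℂ → ℂ, AnalyticAt ℂ g z ∧ ¬ (∀ᶠ w in 𝓝 z, g w = 0) ∧
    ∀ᶠ w in 𝓝 z, f w = sphInv (g w))

/-- A sphere-valued function is meromorphic on a set `D` if it is meromorphic
at every point of `D`. -/
def MeroOn (f : ℂ → CSphere) (D : Set ℂ) : Prop := ∀ z ∈ D, MeroAt f z

/-- `f` takes the value `c ∈ ℂ ∪ {∞}` at `z` with multiplicity at least `m`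
(for `c = ∞` this says that `z` is a pole of order at least `m`). -/
def ValueMultAtLeast (f : ℂ → CSphere) (c : CSphere) (m : ℕ) (z : ℂ) : Prop :=
  match c with
  | finite a => ∃ g : ℂ → ℂ, AnalyticAt ℂ g z ∧ (∀ᶠ w in 𝓝 z, f w = finite (g w)) ∧
      ∀ k < m, iteratedDeriv k (fun w => g w - a) z = 0
  | infty => ∃ g : ℂ → ℂ, AnalyticAt ℂ g z ∧ ¬ (∀ᶠ w in 𝓝 z, g w = 0) ∧
      (∀ᶠ w in 𝓝 z, f w = sphInv (g w)) ∧ ∀ k < m, iteratedDeriv k g z = 0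

/-- The derivative of a sphere-valued meromorphic function: near a point with finite value
it is the derivative of the local analytic representative; at a pole (where the function is
not locally representable by an analytic function) the derivative again has a pole. -/
noncomputable def sphDeriv (f : ℂ → CSphere) (z : ℂ) : CSphere :=
  if h : ∃ g : ℂ → ℂ, AnalyticAt ℂ g z ∧ ∀ᶠ w in 𝓝 z, f w = finite (g w) then
    finite (deriv h.choose z)
  else infty

/-- The spherical derivative `f^#(z) = |f′(z)|/(1+|f(z)|²)` of a meromorphic function,
computed at a pole through the local representative of `1/f`. -/
noncomputable def sphericalDerivative (f : ℂ → CSphere) (z : ℂ) : ℝ :=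
  if h : ∃ g : ℂ → ℂ, AnalyticAt ℂ g z ∧ ∀ᶠ w in 𝓝 z, f w = finite (g w) then
    ‖deriv h.choose z‖ / (1 + ‖h.choose z‖ ^ 2)
  else if h' : ∃ g : ℂ → ℂ, AnalyticAt ℂ g z ∧ ∀ᶠ w in 𝓝 z, f w = sphInv (g w) then
    ‖deriv h'.choose z‖ / (1 + ‖h'.choose z‖ ^ 2)
  else 0

/-- A sequence of sphere-valued functions converges to `g` spherically uniformly on
compact subsets of `D`. -/
def SphUnifConvOn (D : Set ℂ) (s : ℕ → ℂ → CSphere) (g : ℂ → CSphere) : Prop :=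
  ∀ K : Set ℂ, K ⊆ D → IsCompact K →
    ∀ ε > 0, ∀ᶠ n in atTop, ∀ z ∈ K, sphDist (s n z) (g z) < ε

/-- A family `F` of sphere-valued (meromorphic) functions is normal on `D`:
every sequence in `F` has a subsequence converging spherically uniformly on
compact subsets of `D`. -/
def NormalOn (F : Set (ℂ → CSphere)) (D : Set ℂ) : Prop :=
  ∀ s : ℕ → ℂ → CSphere, (∀ n, s n ∈ F) →
    ∃ φ : ℕ → ℕ, StrictMono φ ∧ ∃ g : ℂ → CSphere, SphUnifConvOn D (fun n => s (φ n)) g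

/-- A family `F` is normal at a point `z₀` of `D` if it is normal on some
neighbourhood of `z₀` inside `D`. -/
def NormalAt (F : Set (ℂ → CSphere)) (D : Set ℂ) (z₀ : ℂ) : Prop :=
  ∃ U ∈ 𝓝 z₀, U ⊆ D ∧ NormalOn F U

/-- Positive part of the logarithm. -/
noncomputable def posLog (x : ℝ) : ℝ := max (Real.log x) 0

/-- The order of the pole of `f` at `z` (`0` if `z` is not a pole). -/
noncomputable def poleOrd (f : ℂ → CSphere) (z : ℂ) : ℕ :=
  sSup {m : ℕ | ValueMultAtLeast f CSphere.infty m z}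

/-- `n(t,f)`: the number of poles of `f` in the closed disk of radius `t`,
counted with multiplicity. -/
noncomputable def nCount (f : ℂ → CSphere) (t : ℝ) : ℝ :=
  ∑ᶠ z ∈ Metric.closedBall (0 : ℂ) t, (poleOrd f z : ℝ)

/-- The Nevanlinna counting function `N(r,f)`. -/
noncomputable def NevN (f : ℂ → CSphere) (r : ℝ) : ℝ :=
  (∫ t in (0:ℝ)..r, (nCount f t - nCount f 0) / t) + nCount f 0 * Real.log r

/-- The Nevanlinna proximity function `m(r,f)`. -/
noncomputable def NevM (f : ℂ → CSphere) (r : ℝ) : ℝ :=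
  (2 * Real.pi)⁻¹ *
    ∫ θ in (0:ℝ)..(2 * Real.pi), posLog (sphAbs (f ((r : ℂ) * Complex.exp ((θ : ℂ) * Complex.I))))

/-- The Nevanlinna characteristic `T(r,f) = m(r,f) + N(r,f)`. -/
noncomputable def NevT (f : ℂ → CSphere) (r : ℝ) : ℝ := NevM f r + NevN f r

/-- The order `ρ(f) = limsup_{r → ∞} log T(r,f) / log r` of a meromorphic function on `ℂ`. -/
noncomputable def meroOrder (f : ℂ → CSphere) : EReal :=
  Filter.limsup (fun r : ℝ => ((Real.log (NevT f r) / Real.log r : ℝ) : EReal)) Filter.atTop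

/-- `f` is a rational function: it is given everywhere on `ℂ` by a quotient `p/q` of
coprime polynomials, with value `∞` at the zeros of `q`. -/
def IsRationalFn (f : ℂ → CSphere) : Prop :=
  ∃ p q : Polynomial ℂ, q ≠ 0 ∧ IsCoprime p q ∧
    ∀ z : ℂ, f z = if q.eval z = 0 then CSphere.infty
      else CSphere.finite (p.eval z / q.eval z)

/-- The value of the rational function `p/q` at the point `∞` of the Riemann sphere. -/
noncomputable def valueAtInfty (p q : Polynomial ℂ) : CSphere :=
  if q.natDegree < p.natDegree then CSphere.infty
  else if p.natDegree < q.natDegree then CSphere.finite 0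
  else CSphere.finite (p.leadingCoeff / q.leadingCoeff)

/-- The multiplicity (local degree) with which the rational function `p/q` takes the
value `c` at the point `∞` of the Riemann sphere. -/
noncomputable def multAtInfty (p q : Polynomial ℂ) (c : CSphere) : ℕ :=
  match c with
  | CSphere.infty => max p.natDegree q.natDegree - q.natDegree
  | CSphere.finite a => max p.natDegree q.natDegree - (p - Polynomial.C a * q).natDegree

/-- The maximum modulus `M(r,h) = max_{|z| = r} |h z|` of an entire function. -/
noncomputable def maxModulus (h : ℂ → ℂ) (r : ℝ) : ℝ :=
  sSup ((fun z => ‖h z‖) '' Metric.sphere (0 : ℂ) r)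

/-- The order `limsup_{r → ∞} log log M(r,h) / log r` of an entire function. -/
noncomputable def entireOrder (h : ℂ → ℂ) : EReal :=
  Filter.limsup (fun r : ℝ => ((Real.log (Real.log (maxModulus h r)) / Real.log r : ℝ) : EReal))
    Filter.atTop


open Polynomial
open Polynomial

namespace DefectAux

/-- iterated derivs of quotient of polynomial evals. -/
noncomputable def Nk (A B : Polynomial ℂ) : ℕ → Polynomial ℂ
  | 0 => A
  | (k+1) => derivative (Nk A B k) * B - C ((k : ℂ) + 1) * (Nk A B k * derivative B)

lemma quot_iteratedDeriv (A B : Polynomial ℂ) (k : ℕ) :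
    ∀ w : ℂ, B.eval w ≠ 0 →
      iteratedDeriv k (fun x => A.eval x / B.eval x) w
        = (Nk A B k).eval w / (B.eval w) ^ (k + 1) := by
  induction k with
  | zero => intro w hw; simp [Nk]
  | succ k ih =>
    intro w hw
    have hopen : IsOpen {x : ℂ | B.eval x ≠ 0} :=
      isOpen_ne.preimage (B.continuous_aeval)
    have hmem : {x : ℂ | B.eval x ≠ 0} ∈ 𝓝 w := hopen.mem_nhds hw
    have hev : (iteratedDeriv k (fun x => A.eval x / B.eval x))
        =ᶠ[𝓝 w] fun x => (Nk A B k).eval x / (B.eval x) ^ (k + 1) := by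
      filter_upwards [hmem] with x hx
      exact ih x hx
    rw [iteratedDeriv_succ, hev.deriv_eq]
    have hd1 : HasDerivAt (fun x : ℂ => (Nk A B k).eval x)
        ((derivative (Nk A B k)).eval w) w := (Nk A B k).hasDerivAt w
    have hd2 : HasDerivAt (fun x : ℂ => (B.eval x) ^ (k + 1))
        ((k + 1 : ℕ) * (B.eval w) ^ k * (derivative B).eval w) w := by
      have := (B.hasDerivAt w).fun_pow (k + 1)
      simpa using this
    have hden : (B.eval w) ^ (k + 1) ≠ 0 := pow_ne_zero _ hw
    have := hd1.fun_div hd2 hden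
    rw [this.deriv]
    simp only [Nk, eval_sub, eval_mul, eval_C]
    field_simp
    push_cast
    ring

lemma rootMult_Nk (A B : Polynomial ℂ) (z : ℂ) (hA : A ≠ 0) (hB : B.eval z ≠ 0) :
    ∀ k ≤ rootMultiplicity z A,
      Nk A B k ≠ 0 ∧ rootMultiplicity z (Nk A B k) = rootMultiplicity z A - k := by
  intro k
  induction k with
  | zero => intro _; exact ⟨hA, by simp [Nk]⟩
  | succ k ih =>
    intro hk
    obtain ⟨hN0, hNm⟩ := ih (Nat.le_of_succ_le hk)
    set N := Nk A B k with hNdef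
    set ν := rootMultiplicity z A - k with hν
    have hν1 : 1 ≤ ν := by omega
    have hroot : N.IsRoot z := by
      have : 0 < rootMultiplicity z N := by omega
      exact (rootMultiplicity_pos hN0).mp this
    have hN' : (derivative N) ≠ 0 := by
      intro h
      have := natDegree_eq_zero_of_derivative_eq_zero h
      have hdvd : (X - C z) ^ ν ∣ N := hNm ▸ pow_rootMultiplicity_dvd N z
      have : 1 ≤ N.natDegree := by
        have := natDegree_le_of_dvd (dvd_trans (pow_dvd_pow _ hν1) hdvd) hN0
        simpa using this
      omega
    have hmult' : rootMultiplicity z (derivative N) = ν - 1 := by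
      rw [derivative_rootMultiplicity_of_root hroot, ← hNm]
    -- exact order of derivative N * B is ν - 1
    have hNB0 : derivative N * B ≠ 0 := by
      refine mul_ne_zero hN' (fun h => hB (by simp [h]))
    have hBz : rootMultiplicity z B = 0 := by
      apply rootMultiplicity_eq_zero
      simpa [IsRoot] using hB
    have hmulNB : rootMultiplicity z (derivative N * B) = ν - 1 := by
      rw [rootMultiplicity_mul hNB0, hmult', hBz]; omega
    have hnotdvd : ¬ (X - C z) ^ ν ∣ derivative N * B := by
      have := pow_rootMultiplicity_not_dvd hNB0 z
      rw [hmulNB] at this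
      have hνeq : ν = (ν - 1) + 1 := by omega
      rw [hνeq]; exact this
    have hdvdN : (X - C z) ^ ν ∣ N := hNm ▸ pow_rootMultiplicity_dvd N z
    have hdvd2 : (X - C z) ^ ν ∣ C ((k : ℂ) + 1) * (N * derivative B) :=
      Dvd.dvd.mul_left (hdvdN.mul_right _) _
    have hNk1 : Nk A B (k+1) = derivative N * B - C ((k : ℂ) + 1) * (N * derivative B) := rfl
    have hNk10 : Nk A B (k+1) ≠ 0 := by
      rw [hNk1]
      intro h
      exact hnotdvd (sub_eq_zero.mp h ▸ hdvd2)
    refine ⟨hNk10, ?_⟩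
    have hdvd1' : (X - C z) ^ (ν - 1) ∣ derivative N := by
      rw [← hmult']; exact pow_rootMultiplicity_dvd _ z
    have hle : ν - 1 ≤ rootMultiplicity z (Nk A B (k+1)) := by
      rw [le_rootMultiplicity_iff hNk10, hNk1]
      exact dvd_sub (hdvd1'.mul_right _)
        (((pow_dvd_pow _ (Nat.sub_le ν 1)).trans hdvd2))
    have hlt : rootMultiplicity z (Nk A B (k+1)) < ν := by
      by_contra hcon
      push_neg at hcon
      have hdd : (X - C z) ^ ν ∣ Nk A B (k+1) :=
        (pow_dvd_pow _ hcon).trans (pow_rootMultiplicity_dvd _ z)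
      apply hnotdvd
      have : derivative N * B = Nk A B (k+1) + C ((k : ℂ) + 1) * (N * derivative B) := by
        rw [hNk1]; ring
      rw [this]
      exact dvd_add hdd hdvd2
    omega

lemma key_bridge (A B : Polynomial ℂ) (z : ℂ) (hA : A ≠ 0) (hB : B.eval z ≠ 0) (m : ℕ)
    (h : ∀ k < m, iteratedDeriv k (fun x => A.eval x / B.eval x) z = 0) :
    m ≤ rootMultiplicity z A := by
  by_contra hcon
  push_neg at hcon
  set μ := rootMultiplicity z A with hμ
  obtain ⟨hN0, hNm⟩ := rootMult_Nk A B z hA hB μ le_rfl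
  have hroot : (Nk A B μ).eval z = 0 := by
    have := h μ hcon
    rw [quot_iteratedDeriv A B μ z hB] at this
    have hden : (B.eval z) ^ (μ + 1) ≠ 0 := pow_ne_zero _ hB
    exact (div_eq_zero_iff.mp this).resolve_right hden
  have : 0 < rootMultiplicity z (Nk A B μ) := (rootMultiplicity_pos hN0).mpr hroot
  omega

lemma sum_rootMult (A : Polynomial ℂ) (hA : A ≠ 0) :
    ∑ z ∈ A.roots.toFinset, rootMultiplicity z A = A.natDegree := by
  classical
  have hsplit : A.Splits := IsAlgClosed.splits A
  have hcard : A.roots.card = A.natDegree := (splits_iff_card_roots).mp hsplit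
  rw [← hcard, ← Multiset.toFinset_sum_count_eq]
  exact Finset.sum_congr rfl (fun z _ => (count_roots A).symm)

lemma wronskian_root (A B : Polynomial ℂ) (z : ℂ)
    (hW : derivative A * B - A * derivative B ≠ 0) :
    rootMultiplicity z A ≤ rootMultiplicity z (derivative A * B - A * derivative B) + 1 := by
  set μ := rootMultiplicity z A with hμ
  rcases Nat.eq_zero_or_pos μ with h0 | hpos
  · omega
  have hdvdA : (X - C z) ^ μ ∣ A := pow_rootMultiplicity_dvd A z
  obtain ⟨A₁, hA1⟩ := hdvdA
  have hder : derivative A = C (μ : ℂ) * (X - C z) ^ (μ - 1) * A₁ + (X - C z) ^ μ * derivative A₁ := by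
    rw [hA1, derivative_mul, derivative_pow]
    simp only [derivative_sub, derivative_X, derivative_C, sub_zero, mul_one]
  have hdvd' : (X - C z) ^ (μ - 1) ∣ derivative A := by
    rw [hder]
    refine dvd_add ?_ ?_
    · exact ((pow_dvd_pow _ le_rfl).mul_left _).mul_right _
    · exact ((pow_dvd_pow _ (Nat.sub_le μ 1)).mul_right _)
  have hdvdfull : (X - C z) ^ (μ - 1) ∣ derivative A * B - A * derivative B := by
    refine dvd_sub (hdvd'.mul_right _) ?_
    rw [hA1]
    exact (((pow_dvd_pow _ (Nat.sub_le μ 1)).mul_right _).mul_right _)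
  have := (le_rootMultiplicity_iff hW).mpr hdvdfull
  omega

lemma degW_le (A B : Polynomial ℂ) :
    natDegree (derivative A * B - A * derivative B) ≤ natDegree A + natDegree B - 1 := by
  have h1 : natDegree (derivative A * B) ≤ natDegree A + natDegree B - 1 := by
    rcases eq_or_ne (derivative A) 0 with h | h
    · simp [h]
    · have hA1 : 1 ≤ A.natDegree := by
        by_contra hc
        push_neg at hc
        interval_cases hd : A.natDegree
        · exact h (derivative_of_natDegree_zero hd)
      calc natDegree (derivative A * B) ≤ natDegree (derivative A) + natDegree B :=
            natDegree_mul_le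
        _ ≤ (natDegree A - 1) + natDegree B := by
            have := natDegree_derivative_le A; omega
        _ ≤ natDegree A + natDegree B - 1 := by omega
  have h2 : natDegree (A * derivative B) ≤ natDegree A + natDegree B - 1 := by
    rcases eq_or_ne (derivative B) 0 with h | h
    · simp [h]
    · have hB1 : 1 ≤ B.natDegree := by
        by_contra hc
        push_neg at hc
        interval_cases hd : B.natDegree
        · exact h (derivative_of_natDegree_zero hd)
      calc natDegree (A * derivative B) ≤ natDegree A + natDegree (derivative B) :=
            natDegree_mul_le
        _ ≤ natDegree A + (natDegree B - 1) := by
            have := natDegree_derivative_le B; omega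
        _ ≤ natDegree A + natDegree B - 1 := by omega
  exact (natDegree_sub_le _ _).trans (by omega)

lemma coprime_eval_ne (p q : Polynomial ℂ) (hco : IsCoprime p q) (z : ℂ)
    (hz : q.eval z = 0) : p.eval z ≠ 0 := by
  obtain ⟨u, v, huv⟩ := hco
  intro hp
  have := congrArg (eval z) huv
  simp [hz, hp] at this

lemma mult_bridge_finite (p q : Polynomial ℂ) (hco : IsCoprime p q) (f : ℂ → CSphere)
    (hfz : ∀ z : ℂ, f z = if q.eval z = 0 then CSphere.infty
      else CSphere.finite (p.eval z / q.eval z))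
    (a : ℂ) (z : ℂ) (hz : f z = CSphere.finite a) (hP : p - C a * q ≠ 0)
    (m : ℕ) (hv : ValueMultAtLeast f (CSphere.finite a) m z) :
    m ≤ rootMultiplicity z (p - C a * q) := by
  have hqz : q.eval z ≠ 0 := by
    intro h
    rw [hfz z, if_pos h] at hz
    exact CSphere.noConfusion hz
  obtain ⟨g, hg, hev, hder⟩ := hv
  have hmem : {x : ℂ | q.eval x ≠ 0} ∈ 𝓝 z :=
    (isOpen_ne.preimage q.continuous_aeval).mem_nhds hqz
  have heq : (fun w => (p - C a * q).eval w / q.eval w) =ᶠ[𝓝 z] (fun w => g w - a) := by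
    filter_upwards [hev, hmem] with w hw hwq
    rw [hfz w, if_neg hwq] at hw
    have hgw : g w = p.eval w / q.eval w := by
      have := hw.symm
      injection this
    rw [hgw]
    simp only [eval_sub, eval_mul, eval_C]
    field_simp
  apply DefectAux.key_bridge _ q z hP hqz
  intro k hk
  rw [heq.iteratedDeriv_eq k]
  exact hder k hk

lemma mult_bridge_infty (p q : Polynomial ℂ) (hco : IsCoprime p q) (f : ℂ → CSphere)
    (hfz : ∀ z : ℂ, f z = if q.eval z = 0 then CSphere.infty
      else CSphere.finite (p.eval z / q.eval z))
    (z : ℂ) (hz : f z = CSphere.infty) (hq : q ≠ 0)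
    (m : ℕ) (hv : ValueMultAtLeast f CSphere.infty m z) :
    m ≤ rootMultiplicity z q := by
  have hqz : q.eval z = 0 := by
    by_contra h
    rw [hfz z, if_neg h] at hz
    exact CSphere.noConfusion hz
  have hpz : p.eval z ≠ 0 := coprime_eval_ne p q hco z hqz
  obtain ⟨g, hg0, hgne, hev, hder⟩ := hv
  have hmem : {x : ℂ | p.eval x ≠ 0} ∈ 𝓝 z :=
    (isOpen_ne.preimage p.continuous_aeval).mem_nhds hpz
  have heq : (fun w => q.eval w / p.eval w) =ᶠ[𝓝 z] g := by
    filter_upwards [hev, hmem] with w hw hwp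
    rw [hfz w] at hw
    by_cases hwq : q.eval w = 0
    · rw [if_pos hwq] at hw
      have hg : g w = 0 := by
        by_contra hgw
        rw [CSphere.sphInv, if_neg hgw] at hw
        exact CSphere.noConfusion hw
      rw [hwq, hg]
      simp
    · rw [if_neg hwq] at hw
      have hgw : g w ≠ 0 := by
        intro h0
        rw [CSphere.sphInv, if_pos h0] at hw
        exact CSphere.noConfusion hw
      rw [CSphere.sphInv, if_neg hgw] at hw
      have : p.eval w / q.eval w = (g w)⁻¹ := by injection hw
      field_simp at this ⊢
      linear_combination -this
  apply DefectAux.key_bridge q p z hq hpz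
  intro k hk
  rw [heq.iteratedDeriv_eq k]
  exact hder k hk

end DefectAux

/-- Let `f` be a non-constant rational function taking some value `a₁ ∈ ℂ ∪ {∞}` at
exactly one point of `ℂ`. Let `U` consist of `a₁` together with values omitted by `f`
on `ℂ`, and let `R` consist of totally ramified values of `f` not in `U`, every
`c ∈ R`-point having multiplicity at least `m c ≥ 2`. Then
`|U| + ∑_{c ∈ R} (1 − 1/(m c)) ≤ 2`. -/
theorem defect_relation_rational (f : ℂ → CSphere) (hf : IsRationalFn f)
    (hnc : ¬ ∃ c : CSphere, ∀ z : ℂ, f z = c)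
    (a₁ : CSphere) (ha₁ : ∃! z : ℂ, f z = a₁)
    (U R : Finset CSphere) (m : CSphere → ℕ)
    (ha₁U : a₁ ∈ U)
    (hU : ∀ u ∈ U, u = a₁ ∨ ∀ z : ℂ, f z ≠ u)
    (hRU : ∀ c ∈ R, c ∉ U)
    (hram : ∀ c ∈ R, 2 ≤ m c ∧ ∀ z : ℂ, f z = c → ValueMultAtLeast f c (m c) z) :
    (U.card : ℝ) + ∑ c ∈ R, (1 - 1 / (m c : ℝ)) ≤ 2 := by
  classical
  obtain ⟨p, q, hq, hco, hfz⟩ := hf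
  set d := max p.natDegree q.natDegree with hd
  set P : CSphere → Polynomial ℂ := fun c => match c with
    | CSphere.finite a => p - Polynomial.C a * q
    | CSphere.infty => q
    with hP
  -- basic value correspondence
  have hfiff : ∀ (c : CSphere) (z : ℂ), f z = c ↔ (P c).eval z = 0 := by
    intro c z
    match c with
    | CSphere.infty =>
      rw [hfz z]
      constructor
      · intro h
        by_contra hqz
        rw [if_neg hqz] at h
        exact CSphere.noConfusion h
      · intro h
        exact if_pos h
    | CSphere.finite a =>
      simp only [hP, eval_sub, eval_mul, eval_C]
      rw [hfz z]
      by_cases hqz : q.eval z = 0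
      · rw [if_pos hqz]
        constructor
        · intro h; exact CSphere.noConfusion h
        · intro h
          exfalso
          exact DefectAux.coprime_eval_ne p q hco z hqz (by rw [hqz] at h; simpa using h)
      · rw [if_neg hqz]
        constructor
        · intro h
          have : p.eval z / q.eval z = a := by injection h
          field_simp at this
          rw [this]; ring
        · intro h
          have : p.eval z / q.eval z = a := by
            field_simp
            linear_combination h
          rw [this]
  have hd1 : 1 ≤ d := by
    by_contra hc
    push_neg at hc
    have hd0 : d = 0 := by omega
    have hp0 : p.natDegree = 0 := by omega
    have hq0 : q.natDegree = 0 := by omega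
    obtain ⟨a, ha⟩ := Polynomial.natDegree_eq_zero.mp hp0
    obtain ⟨b, hb⟩ := Polynomial.natDegree_eq_zero.mp hq0
    have hbne : b ≠ 0 := by rintro rfl; simp at hb; exact hq hb.symm
    apply hnc
    refine ⟨CSphere.finite (a / b), fun z => ?_⟩
    rw [hfz z, ← ha, ← hb]
    simp [hbne]
  have hPne : ∀ c, P c ≠ 0 := by
    intro c
    match c with
    | CSphere.infty => exact hq
    | CSphere.finite a =>
      intro h
      have hpq : p = Polynomial.C a * q := by
        have := sub_eq_zero.mp h
        exact this
      have hunit : IsUnit q := by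
        apply IsCoprime.isUnit_of_dvd' hco
        · exact Dvd.intro_left _ hpq.symm
        · exact dvd_rfl
      obtain ⟨u, hu, huq⟩ := Polynomial.isUnit_iff.mp hunit
      apply hnc
      refine ⟨CSphere.finite a, fun z => ?_⟩
      have hqz : q.eval z = u := by rw [← huq]; simp
      have hune : u ≠ 0 := by
        intro h0; rw [h0] at huq; simp at huq; exact hq huq.symm
      rw [hfz z, if_neg (by rw [hqz]; exact hune), hpq]
      simp [hqz, hune]
  have hDle : ∀ c, (P c).natDegree ≤ d := by
    intro c
    match c with
    | CSphere.infty => exact le_max_right _ _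
    | CSphere.finite a =>
      refine (natDegree_sub_le _ _).trans ?_
      have := natDegree_C_mul_le a q
      have h1 : p.natDegree ≤ d := le_max_left _ _
      have h2 : q.natDegree ≤ d := le_max_right _ _
      omega
  have hFmax : ∀ c c', c ≠ c' → (P c).natDegree < d → (P c').natDegree = d := by
    have key2 : ∀ a : ℂ, (p - Polynomial.C a * q).natDegree < d → q.natDegree < d → False := by
      intro a ha hqd
      have hpe : p = (p - Polynomial.C a * q) + Polynomial.C a * q := by ring
      have hpd : p.natDegree < d := by
        rw [hpe]
        refine lt_of_le_of_lt (natDegree_add_le _ _) ?_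
        have h1 := natDegree_C_mul_le a q
        have : (Polynomial.C a * q).natDegree < d := by omega
        exact max_lt ha this
      have : d ≤ max p.natDegree q.natDegree := le_rfl
      omega
    have key3 : ∀ a b : ℂ, a ≠ b → (p - Polynomial.C a * q).natDegree < d →
        (p - Polynomial.C b * q).natDegree < d → False := by
      intro a b hab ha hb
      have hqe : Polynomial.C (a - b) * q
          = (p - Polynomial.C b * q) - (p - Polynomial.C a * q) := by rw [map_sub]; ring
      have hqd : q.natDegree < d := by
        have h1 : (Polynomial.C (a - b) * q).natDegree < d := by
          rw [hqe]
          exact lt_of_le_of_lt (natDegree_sub_le _ _) (max_lt hb ha)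
        rwa [natDegree_C_mul (sub_ne_zero.mpr hab)] at h1
      exact key2 a ha hqd
    have key : ∀ c c', c ≠ c' → (P c).natDegree < d → (P c').natDegree < d → False := by
      intro c c' hne h h'
      rcases c with a | _ <;> rcases c' with b | _
      · exact key3 a b (fun hh => hne (by rw [hh])) h h'
      · exact key2 a h h'
      · exact key2 b h' h
      · exact hne rfl
    intro c c' hne hlt
    have h1 := hDle c'
    by_contra hne'
    exact key c c' hne hlt (by omega)
  have hsmall : ∃ c, (P c).natDegree < d := by
    rcases lt_trichotomy p.natDegree q.natDegree with h | h | h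
    · refine ⟨CSphere.finite 0, ?_⟩
      simp only [hP, map_zero, zero_mul, sub_zero]
      omega
    · have hdd : p.natDegree = d := by omega
      have hpne : p ≠ 0 := by
        intro h0
        rw [h0] at hdd
        simp at hdd
        omega
      have hlq : q.leadingCoeff ≠ 0 := leadingCoeff_ne_zero.mpr hq
      set a := p.leadingCoeff / q.leadingCoeff with ha
      refine ⟨CSphere.finite a, ?_⟩
      have hcoeff : (P (CSphere.finite a)).coeff d = 0 := by
        simp only [hP, coeff_sub, coeff_C_mul]
        rw [(by omega : d = p.natDegree), ← leadingCoeff, ha]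
        rw [show p.natDegree = q.natDegree by omega, ← leadingCoeff]
        field_simp
        ring
      have hle := hDle (CSphere.finite a)
      rcases lt_or_eq_of_le hle with h' | h'
      · exact h'
      · exfalso
        apply hPne (CSphere.finite a)
        have := leadingCoeff_ne_zero.mpr (hPne (CSphere.finite a))
        rw [leadingCoeff, h'] at this
        exact absurd hcoeff this
    · exact ⟨CSphere.infty, lt_of_lt_of_le h (le_max_left _ _)⟩
  set W : Polynomial ℂ := derivative p * q - p * derivative q with hW
  have hWident : ∀ a : ℂ, W = derivative (p - Polynomial.C a * q) * q
      - (p - Polynomial.C a * q) * derivative q := by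
    intro a
    simp only [derivative_sub, derivative_mul, derivative_C, zero_mul]
    ring
  have hWne : W ≠ 0 := by
    intro h0
    have heq : derivative p * q = p * derivative q := by
      have := sub_eq_zero.mp (hW ▸ h0)
      exact this
    have hdp : p ∣ derivative p * q := heq ▸ Dvd.intro _ rfl
    have hp' : p ∣ derivative p := hco.dvd_of_dvd_mul_right hdp
    have hdq : q ∣ p * derivative q := heq ▸ (Dvd.intro_left _ rfl)
    have hq' : q ∣ derivative q := hco.symm.dvd_of_dvd_mul_left hdq
    have hpd0 : p.natDegree = 0 := by
      by_cases hder : derivative p = 0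
      · exact natDegree_eq_zero_of_derivative_eq_zero hder
      · have h1 := natDegree_le_of_dvd hp' hder
        have h2 := natDegree_derivative_le p
        by_contra hc
        have := natDegree_derivative_lt hc
        omega
    have hqd0 : q.natDegree = 0 := by
      by_cases hder : derivative q = 0
      · exact natDegree_eq_zero_of_derivative_eq_zero hder
      · have h1 := natDegree_le_of_dvd hq' hder
        have h2 := natDegree_derivative_le q
        by_contra hc
        have := natDegree_derivative_lt hc
        omega
    omega
  have hWroot : ∀ (c : CSphere) (z : ℂ),
      rootMultiplicity z (P c) ≤ rootMultiplicity z W + 1 := by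
    intro c z
    match c with
    | CSphere.finite a =>
      rw [hWident a]
      exact DefectAux.wronskian_root _ q z (by rw [← hWident a]; exact hWne)
    | CSphere.infty =>
      have hWneg : W = -(derivative q * p - q * derivative p) := by
        rw [hW]; ring
      have hne' : derivative q * p - q * derivative p ≠ 0 := by
        intro h0; apply hWne; rw [hWneg, h0]; ring
      have := DefectAux.wronskian_root q p z hne'
      have hmm : rootMultiplicity z W
          = rootMultiplicity z (derivative q * p - q * derivative p) := by
        conv_lhs => rw [hWneg]
        rw [show -(derivative q * p - q * derivative p)
          = Polynomial.C (-1) * (derivative q * p - q * derivative p) by rw [map_neg, map_one]; ring]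
        rw [rootMultiplicity_mul (by rw [show Polynomial.C (-1 : ℂ)
            * (derivative q * p - q * derivative p)
          = -(derivative q * p - q * derivative p) by rw [map_neg, map_one]; ring]; exact neg_ne_zero.mpr hne')]
        rw [rootMultiplicity_eq_zero (by simp [IsRoot])]
        omega
      rw [hmm]
      exact this
  have hdegW : ∀ c, W.natDegree + 1 ≤ (P c).natDegree + d := by
    intro c
    match c with
    | CSphere.finite a =>
      have h1 : W.natDegree ≤ (p - Polynomial.C a * q).natDegree + q.natDegree - 1 := by
        rw [hWident a]
        exact DefectAux.degW_le _ _
      have h2 : q.natDegree ≤ d := le_max_right _ _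
      have h3 := hDle (CSphere.finite a)
      simp only [hP] at h3 ⊢
      omega
    | CSphere.infty =>
      have h1 : W.natDegree ≤ q.natDegree + p.natDegree - 1 := by
        have hWneg : W = -(derivative q * p - q * derivative p) := by rw [hW]; ring
        rw [hWneg, natDegree_neg]
        exact DefectAux.degW_le _ _
      have h2 : p.natDegree ≤ d := le_max_left _ _
      simp only [hP]
      omega
  -- root sets
  set Z : CSphere → Finset ℂ := fun c => (P c).roots.toFinset with hZdef
  have hZ : ∀ (c : CSphere) (z : ℂ), z ∈ Z c ↔ f z = c := by
    intro c z
    rw [hZdef]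
    simp only [Multiset.mem_toFinset, mem_roots (hPne c), IsRoot, hfiff c z]
  have hsum : ∀ c, ∑ z ∈ Z c, rootMultiplicity z (P c) = (P c).natDegree :=
    fun c => DefectAux.sum_rootMult (P c) (hPne c)
  -- multiplicities for ramified values
  have hRm : ∀ c ∈ R, ∀ z ∈ Z c, m c ≤ rootMultiplicity z (P c) := by
    intro c hc z hzc
    have hfzc : f z = c := (hZ c z).mp hzc
    have hv := (hram c hc).2 z hfzc
    match c with
    | CSphere.finite a =>
      exact DefectAux.mult_bridge_finite p q hco f hfz a z hfzc (hPne (CSphere.finite a)) _ hv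
    | CSphere.infty =>
      exact DefectAux.mult_bridge_infty p q hco f hfz z hfzc hq _ hv
  have hmn : ∀ c ∈ R, m c * (Z c).card ≤ (P c).natDegree := by
    intro c hc
    calc m c * (Z c).card = ∑ _z ∈ Z c, m c := by rw [Finset.sum_const, smul_eq_mul, mul_comm]
    _ ≤ ∑ z ∈ Z c, rootMultiplicity z (P c) := Finset.sum_le_sum (hRm c hc)
    _ = (P c).natDegree := hsum c
  -- a₁ facts
  obtain ⟨z₁, hz₁, huniq⟩ := ha₁
  have hZa₁ : Z a₁ = {z₁} := by
    ext z
    rw [hZ a₁ z, Finset.mem_singleton]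
    constructor
    · exact fun h => huniq z h
    · rintro rfl; exact hz₁
  have hna₁ : (Z a₁).card = 1 := by rw [hZa₁]; simp
  have hDa₁ : 1 ≤ (P a₁).natDegree := by
    rw [← hsum a₁, hZa₁, Finset.sum_singleton]
    have : z₁ ∈ Z a₁ := by rw [hZa₁]; simp
    rw [hZ a₁ z₁] at this
    rw [hfiff a₁ z₁] at hz₁
    exact (rootMultiplicity_pos (hPne a₁)).mpr hz₁
  -- omitted values have degree-0 polynomials
  have homit : ∀ u : CSphere, (∀ z : ℂ, f z ≠ u) → (P u).natDegree = 0 := by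
    intro u hu
    by_contra hne
    have hdeg : 0 < (P u).degree := natDegree_pos_iff_degree_pos.mp (by omega)
    obtain ⟨z, hz⟩ := Complex.exists_root hdeg
    exact hu z ((hfiff u z).mpr hz)
  -- a₁ not in R, S
  have ha₁R : a₁ ∉ R := fun h => hRU a₁ h ha₁U
  set S : Finset CSphere := insert a₁ R with hS
  -- main counting inequality
  have hdisjZ : (S : Set CSphere).PairwiseDisjoint Z := by
    intro c hc c' hc' hne
    simp only [Function.onFun]
    rw [Finset.disjoint_left]
    intro z hzc hzc'
    exact hne (((hZ c z).mp hzc).symm.trans ((hZ c' z).mp hzc'))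
  have hcount : ∑ c ∈ S, (P c).natDegree ≤ W.natDegree + ∑ c ∈ S, (Z c).card := by
    have h1 : ∀ c ∈ S, (P c).natDegree
        ≤ (∑ z ∈ Z c, rootMultiplicity z W) + (Z c).card := by
      intro c _
      rw [← hsum c]
      calc ∑ z ∈ Z c, rootMultiplicity z (P c)
          ≤ ∑ z ∈ Z c, (rootMultiplicity z W + 1) :=
            Finset.sum_le_sum (fun z _ => hWroot c z)
      _ = (∑ z ∈ Z c, rootMultiplicity z W) + (Z c).card := by
            rw [Finset.sum_add_distrib, Finset.sum_const, smul_eq_mul, mul_one]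
    calc ∑ c ∈ S, (P c).natDegree
        ≤ ∑ c ∈ S, ((∑ z ∈ Z c, rootMultiplicity z W) + (Z c).card) :=
          Finset.sum_le_sum h1
    _ = (∑ c ∈ S, ∑ z ∈ Z c, rootMultiplicity z W) + ∑ c ∈ S, (Z c).card :=
          Finset.sum_add_distrib
    _ ≤ W.natDegree + ∑ c ∈ S, (Z c).card := by
          gcongr
          rw [← Finset.sum_biUnion hdisjZ]
          calc ∑ z ∈ S.biUnion Z, rootMultiplicity z W
              ≤ ∑ z ∈ W.roots.toFinset, rootMultiplicity z W := by
                apply Finset.sum_le_sum_of_ne_zero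
                intro z _ h0
                rw [Multiset.mem_toFinset, mem_roots hWne]
                by_contra hroot
                exact h0 (rootMultiplicity_eq_zero hroot)
          _ = W.natDegree := DefectAux.sum_rootMult W hWne
  -- endgame
  by_cases hcase : ∃ u ∈ U, u ≠ a₁
  · -- Case 1: U contains an omitted value u; show R = ∅ and card U ≤ 2
    obtain ⟨u, huU, hua₁⟩ := hcase
    have huomit : ∀ z : ℂ, f z ≠ u := (hU u huU).resolve_left hua₁
    have hDu : (P u).natDegree = 0 := homit u huomit
    have hDu' : (P u).natDegree < d := by omega
    have huS : ∀ c ∈ S, c ≠ u := by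
      intro c hc
      rw [hS, Finset.mem_insert] at hc
      rcases hc with rfl | hc
      · exact fun h => hua₁ h.symm
      · intro h; exact hRU c hc (h ▸ huU)
    have hDS : ∀ c ∈ S, (P c).natDegree = d := by
      intro c hc
      exact hFmax u c (fun h => huS c hc h.symm) hDu'
    have hR0 : R = ∅ := by
      by_contra hRne
      obtain ⟨c₀, hc₀⟩ := Finset.nonempty_iff_ne_empty.mpr hRne
      have hcard : ∀ c ∈ R, (Z c).card < d := by
        intro c hc
        have h1 := hmn c hc
        have h2 := (hram c hc).1
        have h3 := hDS c (by rw [hS]; exact Finset.mem_insert_of_mem hc)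
        nlinarith [(Z c).card.zero_le]
      -- sum over S
      have hsumS : ∑ c ∈ S, (P c).natDegree = d + ∑ c ∈ R, d := by
        rw [hS, Finset.sum_insert ha₁R, hDS a₁ (by rw [hS]; exact Finset.mem_insert_self _ _)]
        congr 1
        exact Finset.sum_congr rfl (fun c hc => hDS c (by rw [hS]; exact Finset.mem_insert_of_mem hc))
      have hsumn : ∑ c ∈ S, (Z c).card = 1 + ∑ c ∈ R, (Z c).card := by
        rw [hS, Finset.sum_insert ha₁R, hna₁]
      have hWd : W.natDegree + 1 ≤ d := by
        have := hdegW u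
        omega
      have hlt : ∑ c ∈ R, (Z c).card < ∑ c ∈ R, d :=
        Finset.sum_lt_sum_of_nonempty (Finset.nonempty_iff_ne_empty.mpr hRne) hcard
      omega
    rw [hR0]
    simp only [Finset.sum_empty, add_zero]
    have hUsub : U ⊆ {a₁, u} := by
      intro v hv
      rcases hU v hv with rfl | hvo
      · exact Finset.mem_insert_self _ _
      · have hDv : (P v).natDegree = 0 := homit v hvo
        have : v = u := by
          by_contra hvu
          have := hFmax u v (fun h => hvu h.symm) hDu'
          omega
        rw [this]
        exact Finset.mem_insert_of_mem (Finset.mem_singleton_self u)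
    have hcard2 : U.card ≤ 2 := le_trans (Finset.card_le_card hUsub)
      (le_trans (Finset.card_insert_le _ _) (by simp))
    exact_mod_cast hcard2
  · -- Case 2: U = {a₁}
    push_neg at hcase
    have hUeq : U = {a₁} := by
      ext v
      rw [Finset.mem_singleton]
      constructor
      · exact fun hv => hcase v hv
      · rintro rfl; exact ha₁U
    rw [hUeq, Finset.card_singleton]
    -- show sum ≤ 1
    obtain ⟨cinf, hcinf⟩ := hsmall
    have hDS : ∀ c, c ≠ cinf → (P c).natDegree = d := fun c hc =>
      hFmax cinf c (fun h => hc h.symm) hcinf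
    have hdpos : (0:ℝ) < d := by exact_mod_cast hd1
    -- real inequalities
    have hterm : ∀ c ∈ R, (1 - 1/(m c : ℝ)) * d
        ≤ ((P c).natDegree - (Z c).card) + (d - (P c).natDegree) := by
      intro c hc
      have h2 : 2 ≤ m c := (hram c hc).1
      have hmpos : (0:ℝ) < m c := by exact_mod_cast (by omega : 0 < m c)
      have h1 : (m c : ℝ) * (Z c).card ≤ d := by
        have := hmn c hc
        have := hDle c
        exact_mod_cast le_trans (by exact_mod_cast hmn c hc) (by exact_mod_cast hDle c)
      have hn : ((Z c).card : ℝ) ≤ d / m c := by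
        rw [le_div_iff₀ hmpos]
        linarith [h1]
      have heq : (1 - 1/(m c : ℝ)) * d = d - d / m c := by ring
      rw [heq]
      have : (d:ℝ) / m c ≤ d / m c := le_rfl
      linarith
    have hsumR : (∑ c ∈ R, (1 - 1/(m c : ℝ))) * d
        ≤ ∑ c ∈ R, (((P c).natDegree - (Z c).card : ℝ) + (d - (P c).natDegree)) := by
      rw [Finset.sum_mul]
      exact Finset.sum_le_sum hterm
    -- sum of (d - D c) over S
    have hsumdD : ∑ c ∈ S, ((d:ℝ) - (P c).natDegree) ≤ (d:ℝ) - (P cinf).natDegree := by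
      have : ∀ c ∈ S, ((d:ℝ) - (P c).natDegree)
          = if c = cinf then ((d:ℝ) - (P cinf).natDegree) else 0 := by
        intro c _
        by_cases h : c = cinf
        · rw [if_pos h, h]
        · rw [if_neg h, hDS c h]; ring
      rw [Finset.sum_congr rfl this, Finset.sum_ite_eq' S cinf]
      by_cases h : cinf ∈ S
      · rw [if_pos h]
      · rw [if_neg h]
        have := hDle cinf
        have : ((P cinf).natDegree : ℝ) ≤ d := by exact_mod_cast hDle cinf
        linarith
    -- cast main counting
    have hcountR : (∑ c ∈ S, ((P c).natDegree : ℝ)) - ∑ c ∈ S, ((Z c).card : ℝ)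
        ≤ (W.natDegree : ℝ) := by
      have := hcount
      push_cast
      have h' : ((∑ c ∈ S, (P c).natDegree : ℕ) : ℝ)
          ≤ ((W.natDegree + ∑ c ∈ S, (Z c).card : ℕ) : ℝ) := by exact_mod_cast hcount
      push_cast at h'
      linarith
    have hWR : (W.natDegree : ℝ) ≤ ((P cinf).natDegree : ℝ) + d - 1 := by
      have := hdegW cinf
      have h' : (W.natDegree + 1 : ℝ) ≤ ((P cinf).natDegree : ℝ) + d := by exact_mod_cast this
      linarith
    -- combine
    have hsplitD : ∑ c ∈ S, ((P c).natDegree : ℝ)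
        = ((P a₁).natDegree : ℝ) + ∑ c ∈ R, ((P c).natDegree : ℝ) := by
      rw [hS, Finset.sum_insert ha₁R]
    have hsplitn : ∑ c ∈ S, ((Z c).card : ℝ) = 1 + ∑ c ∈ R, ((Z c).card : ℝ) := by
      rw [hS, Finset.sum_insert ha₁R, hna₁]; norm_num
    have hsplitdD : ∑ c ∈ S, ((d:ℝ) - (P c).natDegree)
        = ((d:ℝ) - (P a₁).natDegree) + ∑ c ∈ R, ((d:ℝ) - (P c).natDegree) := by
      rw [hS, Finset.sum_insert ha₁R]
    have hDa₁R : (1:ℝ) ≤ ((P a₁).natDegree : ℝ) := by exact_mod_cast hDa₁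
    have hcinfR : ((P cinf).natDegree : ℝ) ≤ d := by exact_mod_cast hDle cinf
    have hsumRsplit : ∑ c ∈ R, (((P c).natDegree - (Z c).card : ℝ) + (d - (P c).natDegree))
        = (∑ c ∈ R, ((P c).natDegree : ℝ)) - (∑ c ∈ R, ((Z c).card : ℝ))
          + ∑ c ∈ R, ((d:ℝ) - (P c).natDegree) := by
      rw [Finset.sum_add_distrib, Finset.sum_sub_distrib]
    have hfinal : (∑ c ∈ R, (1 - 1/(m c : ℝ))) * d ≤ d := by
      have hA := hsumR
      rw [hsumRsplit] at hA
      -- (d-1) ≤ (D a₁ - 1) + (d - D a₁)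
      have hB : (∑ c ∈ R, (1 - 1/(m c : ℝ))) * d + ((d:ℝ) - 1)
          ≤ (∑ c ∈ S, ((P c).natDegree : ℝ)) - (∑ c ∈ S, ((Z c).card : ℝ))
            + ∑ c ∈ S, ((d:ℝ) - (P c).natDegree) := by
        rw [hsplitD, hsplitn, hsplitdD]
        linarith
      linarith [hcountR, hWR, hsumdD, hB]
    have hle1 : (∑ c ∈ R, (1 - 1/(m c : ℝ))) ≤ 1 := by
      by_contra hcon
      push_neg at hcon
      nlinarith [hfinal]
    linarith
end

section
/- Let h(z) = (sin(e^z) − 1)/(sin(e^z) + 1). Then h is a meromorphic function on ℂ that omits the value 1, every zero of h is multiple (has multiplicity at least 2), and every pole of h is multiple (has multiplicity at least 2). -/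
open Filter Topology
open scoped Classical

open CSphere

private lemma S_analyticAt (z : ℂ) :
    AnalyticAt ℂ (fun w => Complex.sin (Complex.exp w)) z :=
  (Complex.differentiable_sin.comp Complex.differentiable_exp).analyticAt z

private lemma S_hasDerivAt_zero (z : ℂ) (hs : Complex.sin (Complex.exp z) ^ 2 = 1) :
    HasDerivAt (fun w => Complex.sin (Complex.exp w)) 0 z := by
  have hcos : Complex.cos (Complex.exp z) = 0 := by
    have h := Complex.sin_sq_add_cos_sq (Complex.exp z)
    have h2 : Complex.cos (Complex.exp z) ^ 2 = 0 := by linear_combination h - hs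
    exact (pow_eq_zero_iff (by norm_num : (2:ℕ) ≠ 0)).mp h2
  have := (Complex.hasDerivAt_sin (Complex.exp z)).comp z (Complex.hasDerivAt_exp z)
  simp [hcos] at this
  exact this

private lemma S_not_eventually (z : ℂ) :
    ¬ ∀ᶠ w in 𝓝 z, Complex.sin (Complex.exp w) + 1 = 0 := by
  intro hev
  have hA : AnalyticOnNhd ℂ (fun w => Complex.sin (Complex.exp w) + 1) Set.univ :=
    fun w _ => (S_analyticAt w).add analyticAt_const
  have heq := hA.eqOn_zero_of_preconnected_of_eventuallyEq_zero isPreconnected_univ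
    (Set.mem_univ z) (hev.mono fun w hw => hw)
  have hv := heq (Set.mem_univ (Complex.log ((Real.pi : ℂ) / 2)))
  have hpi : ((Real.pi : ℂ) / 2) ≠ 0 := by
    simp [Complex.ofReal_ne_zero, Real.pi_ne_zero]
  simp only [Pi.zero_apply, Complex.exp_log hpi] at hv
  rw [show ((Real.pi : ℂ) / 2) = ((Real.pi / 2 : ℝ) : ℂ) by push_cast; ring,
    ← Complex.ofReal_sin, Real.sin_pi_div_two] at hv
  norm_num at hv

/-- The function `h(z) = (sin(eᶻ) − 1)/(sin(eᶻ) + 1)` is meromorphic on `ℂ`, omits the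
value `1`, and all its zeros and poles are multiple. -/
theorem sin_exp_moebius_example (h : ℂ → CSphere)
    (hh : ∀ z : ℂ, h z = if Complex.sin (Complex.exp z) + 1 = 0 then CSphere.infty
      else CSphere.finite
        ((Complex.sin (Complex.exp z) - 1) / (Complex.sin (Complex.exp z) + 1))) :
    MeroOn h Set.univ ∧
    (∀ z : ℂ, h z ≠ CSphere.finite 1) ∧
    (∀ z : ℂ, h z = CSphere.finite 0 → ValueMultAtLeast h (CSphere.finite 0) 2 z) ∧
    (∀ z : ℂ, h z = CSphere.infty → ValueMultAtLeast h CSphere.infty 2 z) := by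
  have hSc : Continuous fun w : ℂ => Complex.sin (Complex.exp w) + 1 :=
    (Complex.continuous_sin.comp Complex.continuous_exp).add continuous_const
  have hSc' : Continuous fun w : ℂ => Complex.sin (Complex.exp w) - 1 :=
    (Complex.continuous_sin.comp Complex.continuous_exp).sub continuous_const
  have hAnum : ∀ z : ℂ, AnalyticAt ℂ (fun w => Complex.sin (Complex.exp w) - 1) z :=
    fun z => (S_analyticAt z).sub analyticAt_const
  have hAden : ∀ z : ℂ, AnalyticAt ℂ (fun w => Complex.sin (Complex.exp w) + 1) z :=
    fun z => (S_analyticAt z).add analyticAt_const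
  have hfin : ∀ z : ℂ, Complex.sin (Complex.exp z) + 1 ≠ 0 →
      ∀ᶠ w in 𝓝 z, h w = CSphere.finite
        ((Complex.sin (Complex.exp w) - 1) / (Complex.sin (Complex.exp w) + 1)) := by
    intro z hz
    filter_upwards [hSc.continuousAt.eventually_ne hz] with w hw
    rw [hh w, if_neg hw]
  have hdenne : ∀ z : ℂ, Complex.sin (Complex.exp z) + 1 = 0 →
      Complex.sin (Complex.exp z) - 1 ≠ 0 := by
    intro z hz h0
    have : (2 : ℂ) = 0 := by linear_combination hz - h0
    norm_num at this
  have hpole : ∀ z : ℂ, Complex.sin (Complex.exp z) + 1 = 0 →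
      ∀ᶠ w in 𝓝 z, h w = sphInv
        ((Complex.sin (Complex.exp w) + 1) / (Complex.sin (Complex.exp w) - 1)) := by
    intro z hz
    filter_upwards [hSc'.continuousAt.eventually_ne (hdenne z hz)] with w hw
    rw [hh w]
    by_cases hw' : Complex.sin (Complex.exp w) + 1 = 0
    · rw [if_pos hw', hw', zero_div]
      simp [sphInv]
    · rw [if_neg hw']
      simp only [sphInv, if_neg (div_ne_zero hw' hw), inv_div]
  have hnev : ∀ z : ℂ, Complex.sin (Complex.exp z) + 1 = 0 →
      ¬ ∀ᶠ w in 𝓝 z,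
        (Complex.sin (Complex.exp w) + 1) / (Complex.sin (Complex.exp w) - 1) = 0 := by
    intro z hz hev
    apply S_not_eventually z
    filter_upwards [hev, hSc'.continuousAt.eventually_ne (hdenne z hz)] with w h1 h2
    exact (div_eq_zero_iff.mp h1).resolve_right h2
  refine ⟨?_, ?_, ?_, ?_⟩
  · intro z _
    by_cases hc : Complex.sin (Complex.exp z) + 1 = 0
    · exact Or.inr ⟨fun w => (Complex.sin (Complex.exp w) + 1) / (Complex.sin (Complex.exp w) - 1),
        (hAden z).div (hAnum z) (hdenne z hc), hnev z hc, hpole z hc⟩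
    · exact Or.inl ⟨fun w => (Complex.sin (Complex.exp w) - 1) / (Complex.sin (Complex.exp w) + 1),
        (hAnum z).div (hAden z) hc, hfin z hc⟩
  · intro z
    rw [hh z]
    split_ifs with hc
    · simp
    · intro heq
      simp only [CSphere.finite.injEq] at heq
      have h2 := (div_eq_iff hc).mp heq
      have : (-1 : ℂ) = 1 := by linear_combination h2
      norm_num at this
  · intro z hz
    rw [hh z] at hz
    by_cases hc : Complex.sin (Complex.exp z) + 1 = 0
    · rw [if_pos hc] at hz; exact absurd hz (by simp)
    · rw [if_neg hc] at hz
      simp only [CSphere.finite.injEq] at hz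
      have hnum : Complex.sin (Complex.exp z) - 1 = 0 :=
        (div_eq_zero_iff.mp hz).resolve_right hc
      have hs1 : Complex.sin (Complex.exp z) = 1 := sub_eq_zero.mp hnum
      have hd := S_hasDerivAt_zero z (by rw [hs1]; norm_num)
      have hg : deriv (fun w =>
          (Complex.sin (Complex.exp w) - 1) / (Complex.sin (Complex.exp w) + 1)) z = 0 := by
        have := ((hd.sub_const 1).div (hd.add_const 1) hc).deriv
        simp at this
        exact this
      refine ⟨fun w => (Complex.sin (Complex.exp w) - 1) / (Complex.sin (Complex.exp w) + 1),
        (hAnum z).div (hAden z) hc, hfin z hc, ?_⟩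
      intro k hk
      interval_cases k
      · rw [iteratedDeriv_zero]
        simp [hs1]
      · rw [iteratedDeriv_one]
        simp only [sub_zero]
        exact hg
  · intro z hz
    rw [hh z] at hz
    by_cases hc : Complex.sin (Complex.exp z) + 1 = 0
    · have hd := S_hasDerivAt_zero z (by
        have : Complex.sin (Complex.exp z) = -1 := by linear_combination hc
        rw [this]; norm_num)
      have hg : deriv (fun w =>
          (Complex.sin (Complex.exp w) + 1) / (Complex.sin (Complex.exp w) - 1)) z = 0 := by
        have := ((hd.add_const 1).div (hd.sub_const 1) (hdenne z hc)).deriv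
        simp at this
        exact this
      refine ⟨fun w => (Complex.sin (Complex.exp w) + 1) / (Complex.sin (Complex.exp w) - 1),
        (hAden z).div (hAnum z) (hdenne z hc), hnev z hc, hpole z hc, ?_⟩
      intro k hk
      interval_cases k
      · rw [iteratedDeriv_zero, hc, zero_div]
      · rw [iteratedDeriv_one]
        exact hg
    · rw [if_neg hc] at hz; exact absurd hz (by simp)
end

section
/- For each integer n ≥ 2 let f_n(z) = ((n+1)/(2n))·e^{nz} + ((n−1)/(2n))·e^{−nz}. Then for every n ≥ 2 and every z ∈ ℂ the identity n²(f_n(z)² − 1) = (f_n′(z))² − 1 holds; consequently f_n and f_n′ share the set S = {1, −1} on the unit disk, i.e., f_n(z) ∈ S if and only if f_n′(z) ∈ S. Moreover, the analytic family F = {f_n : n = 2, 3, 4, …} is not normal at 0. -/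
open Filter Topology
open scoped Classical

open CSphere

private lemma mem_pm_iff_aux (w : ℂ) : w ∈ ({1, -1} : Set ℂ) ↔ w ^ 2 = 1 := by
  simp only [Set.mem_insert_iff, Set.mem_singleton_iff]
  constructor
  · rintro (rfl | rfl) <;> ring
  · intro h
    have h2 : (w - 1) * (w + 1) = 0 := by linear_combination h
    rcases mul_eq_zero.1 h2 with h3 | h3
    · exact Or.inl (by linear_combination h3)
    · exact Or.inr (by linear_combination h3)

/-- For `fₙ(z) = ((n+1)/(2n)) eⁿᶻ + ((n−1)/(2n)) e⁻ⁿᶻ` (`n ≥ 2`) one has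
`n²(fₙ² − 1) = (fₙ′)² − 1`; consequently `fₙ` and `fₙ′` share the set `S = {1, −1}` on
the unit disk; yet the analytic family `F = {fₙ : n ≥ 2}` is not normal at `0`. -/
theorem shared_set_not_normal_example (f : ℕ → ℂ → ℂ)
    (hf : ∀ n : ℕ, ∀ z : ℂ, f n z =
      (((n : ℂ) + 1) / (2 * (n : ℂ))) * Complex.exp ((n : ℂ) * z) +
      (((n : ℂ) - 1) / (2 * (n : ℂ))) * Complex.exp (-((n : ℂ) * z))) :
    (∀ n : ℕ, 2 ≤ n → ∀ z : ℂ,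
      (n : ℂ) ^ 2 * ((f n z) ^ 2 - 1) = (deriv (f n) z) ^ 2 - 1) ∧
    (∀ n : ℕ, 2 ≤ n → ∀ z ∈ Metric.ball (0 : ℂ) 1,
      (f n z ∈ ({1, -1} : Set ℂ) ↔ deriv (f n) z ∈ ({1, -1} : Set ℂ))) ∧
    ¬ NormalAt {g : ℂ → CSphere | ∃ n : ℕ, 2 ≤ n ∧ g = fun z => CSphere.finite (f n z)}
      (Metric.ball (0 : ℂ) 1) 0 := by
  have hkey : ∀ n : ℕ, 2 ≤ n → ∀ z : ℂ,
      (n : ℂ) ^ 2 * ((f n z) ^ 2 - 1) = (deriv (f n) z) ^ 2 - 1 := by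
    intro n hn z
    have hn0 : (n : ℂ) ≠ 0 := Nat.cast_ne_zero.2 (by omega)
    have h1 : HasDerivAt (fun z => Complex.exp ((n:ℂ)*z)) (Complex.exp ((n:ℂ)*z) * (n:ℂ)) z := by
      simpa using ((hasDerivAt_id z).const_mul (n:ℂ)).cexp
    have h2 : HasDerivAt (fun z => Complex.exp (-((n:ℂ)*z)))
        (Complex.exp (-((n:ℂ)*z)) * (-(n:ℂ))) z := by
      simpa using (((hasDerivAt_id z).const_mul (n:ℂ)).neg).cexp
    have hfn : f n = fun z => (((n : ℂ) + 1) / (2 * (n : ℂ))) * Complex.exp ((n : ℂ) * z) +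
        (((n : ℂ) - 1) / (2 * (n : ℂ))) * Complex.exp (-((n : ℂ) * z)) := funext (hf n)
    have hd : deriv (f n) z = (((n:ℂ)+1)/(2*n)) * (Complex.exp ((n:ℂ)*z) * n) +
        (((n:ℂ)-1)/(2*n)) * (Complex.exp (-((n:ℂ)*z)) * (-(n:ℂ))) := by
      rw [hfn]
      exact ((h1.const_mul _).add (h2.const_mul _)).deriv
    have hexp : Complex.exp ((n:ℂ)*z) * Complex.exp (-((n:ℂ)*z)) = 1 := by
      rw [← Complex.exp_add]; simp
    rw [hf n z, hd]
    field_simp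
    ring_nf
    linear_combination (4*(n:ℂ)^2 - 4) * hexp
  refine ⟨hkey, ?_, ?_⟩
  · intro n hn z _
    have hn2 : ((n : ℂ) ^ 2) ≠ 0 := pow_ne_zero _ (Nat.cast_ne_zero.2 (by omega))
    rw [mem_pm_iff_aux, mem_pm_iff_aux]
    constructor
    · intro h
      linear_combination (n:ℂ)^2 * h - hkey n hn z
    · intro h
      have h3 : (n:ℂ)^2 * ((f n z)^2 - 1) = 0 := by
        rw [hkey n hn z]; linear_combination h
      have h4 := (mul_eq_zero.1 h3).resolve_left hn2
      linear_combination h4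
  · rintro ⟨U, hU, hUD, hnorm⟩
    obtain ⟨ρ, hρ, hball⟩ := Metric.mem_nhds_iff.1 hU
    set r : ℝ := ρ / 2 with hrdef
    have hr0 : 0 < r := by positivity
    set K : Set ℂ := Metric.closedBall 0 r with hKdef
    have hKU : K ⊆ U := fun z hz => hball (by
      simp only [hKdef, Metric.mem_closedBall] at hz
      exact Metric.mem_ball.2 (lt_of_le_of_lt hz (by simp [hrdef]; linarith)))
    have hKc : IsCompact K := isCompact_closedBall _ _
    obtain ⟨φ, hφ, g, hconv⟩ := hnorm (fun n z => CSphere.finite (f (n+2) z))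
      (fun n => ⟨n+2, by omega, rfl⟩)
    have hgrow : ∀ m : ℕ, 2 ≤ m → ∀ t : ℝ, 0 < t → (m : ℝ) * t / 2 ≤ ‖f m (t:ℂ)‖ := by
      intro m hm t ht
      have hm2 : (2:ℝ) ≤ (m:ℝ) := by exact_mod_cast hm
      have hm0 : (0:ℝ) < (m:ℝ) := by linarith
      have hfm : f m (t:ℂ) = (((((m:ℝ)+1)/(2*m)) * Real.exp ((m:ℝ)*t) +
          (((m:ℝ)-1)/(2*m)) * Real.exp (-((m:ℝ)*t)) : ℝ) : ℂ) := by
        rw [hf]; push_cast; ring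
      have hc1 : (1:ℝ)/2 ≤ ((m:ℝ)+1)/(2*m) := by
        rw [div_le_div_iff₀ (by norm_num) (by linarith)]; linarith
      have hc2 : (0:ℝ) ≤ ((m:ℝ)-1)/(2*m) := by
        apply div_nonneg <;> linarith
      have hE1 : (m:ℝ)*t + 1 ≤ Real.exp ((m:ℝ)*t) := by
        have := Real.add_one_le_exp ((m:ℝ)*t); linarith
      have hE2 : (0:ℝ) < Real.exp (-((m:ℝ)*t)) := Real.exp_pos _
      have hE1p : (0:ℝ) < Real.exp ((m:ℝ)*t) := Real.exp_pos _
      rw [hfm, Complex.norm_real, Real.norm_eq_abs]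
      have hA : (m:ℝ)*t/2 ≤ (((m:ℝ)+1)/(2*m)) * Real.exp ((m:ℝ)*t) +
          (((m:ℝ)-1)/(2*m)) * Real.exp (-((m:ℝ)*t)) := by
        nlinarith [mul_pos hm0 ht]
      exact le_trans hA (le_abs_self _)
    have htKmem : ∀ t : ℝ, 0 < t → t ≤ r → (t:ℂ) ∈ K := by
      intro t ht htr
      simp only [hKdef, Metric.mem_closedBall, dist_zero_right, Complex.norm_real,
        Real.norm_eq_abs]
      rwa [abs_of_pos ht]
    have hginf : ∀ t : ℝ, 0 < t → t ≤ r → g (t:ℂ) = CSphere.infty := by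
      intro t ht htr
      cases hgt : g (t:ℂ) with
      | infty => rfl
      | finite c =>
        exfalso
        have hs2 : (0:ℝ) < Real.sqrt (1 + ‖c‖^2) := Real.sqrt_pos.2 (by positivity)
        have hε : (0:ℝ) < 1 / Real.sqrt (1 + ‖c‖^2) := by positivity
        obtain ⟨N, hN⟩ := exists_nat_ge ((2*(2*‖c‖+1))/t)
        obtain ⟨n, hn1, hn2⟩ :=
          ((hconv K hKU hKc _ hε).and (eventually_ge_atTop N)).exists
        have hd := hn1 (t:ℂ) (htKmem t ht htr)
        have hm2 : 2 ≤ φ n + 2 := by omega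
        have hwlb : 2*‖c‖+1 ≤ ‖f (φ n + 2) (t:ℂ)‖ := by
          refine le_trans ?_ (hgrow (φ n + 2) hm2 t ht)
          have hNm : (N:ℝ) ≤ ((φ n + 2 : ℕ):ℝ) := by
            exact_mod_cast le_trans hn2 (le_trans hφ.le_apply (by omega))
          have h2 : 2*(2*‖c‖+1) ≤ (N:ℝ)*t := by
            rw [div_le_iff₀ ht] at hN; linarith
          nlinarith
        rw [hgt] at hd
        simp only [sphDist] at hd
        set w := f (φ n + 2) (t:ℂ) with hwdef
        have hs1 : (0:ℝ) < Real.sqrt (1 + ‖w‖^2) := Real.sqrt_pos.2 (by positivity)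
        have hs1le : Real.sqrt (1 + ‖w‖^2) ≤ 1 + ‖w‖ := by
          have h5 : (1 + ‖w‖^2) ≤ (1+‖w‖)^2 := by nlinarith [norm_nonneg w]
          calc Real.sqrt (1 + ‖w‖^2) ≤ Real.sqrt ((1+‖w‖)^2) := Real.sqrt_le_sqrt h5
            _ = 1 + ‖w‖ := Real.sqrt_sq (by positivity)
        have hwc : (1 + ‖w‖) ≤ 2 * ‖w - c‖ := by
          have h6 := norm_sub_norm_le w c
          linarith
        have h7 : 1 / Real.sqrt (1 + ‖c‖^2) ≤
            2 * ‖w - c‖ / (Real.sqrt (1 + ‖w‖^2) * Real.sqrt (1 + ‖c‖^2)) := by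
          rw [div_le_div_iff₀ hs2 (mul_pos hs1 hs2)]
          nlinarith [hs2.le]
        linarith
    obtain ⟨n, hn⟩ := (hconv K hKU hKc (1/2) (by norm_num)).exists
    have hm2 : 2 ≤ φ n + 2 := by omega
    have hm0 : ((φ n + 2 : ℕ):ℂ) ≠ 0 := Nat.cast_ne_zero.2 (by omega)
    have hcont : Continuous (f (φ n + 2)) := by
      have heq : f (φ n + 2) = fun z => ((((φ n + 2:ℕ):ℂ)+1)/(2*((φ n + 2:ℕ):ℂ))) *
          Complex.exp (((φ n + 2:ℕ):ℂ)*z) + ((((φ n + 2:ℕ):ℂ)-1)/(2*((φ n + 2:ℕ):ℂ))) *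
          Complex.exp (-(((φ n + 2:ℕ):ℂ)*z)) := funext (hf _)
      rw [heq]; fun_prop
    have hf0 : f (φ n + 2) 0 = 1 := by
      rw [hf]
      simp only [mul_zero, neg_zero, Complex.exp_zero, mul_one]
      rw [← add_div]
      have h10 : ((φ n + 2:ℕ):ℂ) + 1 + (((φ n + 2:ℕ):ℂ) - 1) = 2 * ((φ n + 2:ℕ):ℂ) := by ring
      rw [h10, div_self (mul_ne_zero two_ne_zero hm0)]
    obtain ⟨δ, hδ, hδball⟩ := Metric.continuousAt_iff.1 hcont.continuousAt (1:ℝ) one_pos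
    set t := min (δ/2) r with htdef
    have ht : 0 < t := lt_min (by positivity) hr0
    have htr : t ≤ r := min_le_right _ _
    have htδ : dist ((t:ℂ)) 0 < δ := by
      simp only [dist_zero_right, Complex.norm_real, Real.norm_eq_abs, abs_of_pos ht]
      calc t ≤ δ/2 := min_le_left _ _
        _ < δ := by linarith
    have hnear := hδball htδ
    rw [hf0] at hnear
    have hwsmall : ‖f (φ n + 2) (t:ℂ)‖ < 2 := by
      rw [dist_eq_norm] at hnear
      have h8 := norm_sub_norm_le (f (φ n + 2) (t:ℂ)) 1
      simp only [norm_one] at h8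
      linarith
    have hd := hn (t:ℂ) (htKmem t ht htr)
    rw [hginf t ht htr] at hd
    simp only [sphDist] at hd
    have hx0 := norm_nonneg (f (φ n + 2) (t:ℂ))
    have hs : Real.sqrt (1 + ‖f (φ n + 2) (t:ℂ)‖^2) < 4 :=
      (Real.sqrt_lt' (by norm_num)).2 (by nlinarith)
    have hspos : (0:ℝ) < Real.sqrt (1 + ‖f (φ n + 2) (t:ℂ)‖^2) :=
      Real.sqrt_pos.2 (by positivity)
    have h9 : (1:ℝ)/2 < 2 / Real.sqrt (1 + ‖f (φ n + 2) (t:ℂ)‖^2) := by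
      rw [div_lt_div_iff₀ (by norm_num) hspos]; nlinarith
    linarith
end

section
/- For each integer n ≥ 2 let f_n(z) = ((n+1)/(2n))·e^{nz} + ((n−1)/(2n))·e^{−nz} and h_n(z) = 1/f_n(z). Then the family H = {h_n : n = 2, 3, 4, …} of meromorphic functions on the unit disk is not normal on the unit disk, yet every h ∈ H satisfies the partial sharing condition h(z) ∈ {1, −1} ⟹ h′(z) ∈ {1, −1}, and every h ∈ H has no zeroes (so in particular all zeroes of every h ∈ H are multiple). -/
open Filter Topology
open scoped Classical

open CSphere

/-- the pole point of `f n` -/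
noncomputable def polePt (n : ℕ) : ℂ :=
  Complex.log (-(((n:ℂ)-1)/((n:ℂ)+1))) / (2*(n:ℂ))

lemma polePt_f_eq_zero {n : ℕ} (hn : 2 ≤ n) :
    (((n : ℂ) + 1) / (2 * (n : ℂ))) * Complex.exp ((n : ℂ) * polePt n) +
      (((n : ℂ) - 1) / (2 * (n : ℂ))) * Complex.exp (-((n : ℂ) * polePt n)) = 0 := by
  have hn0 : (n:ℂ) ≠ 0 := Nat.cast_ne_zero.mpr (by omega)
  have hn1 : (n:ℂ) - 1 ≠ 0 := by
    intro hc
    have : (n:ℂ) = 1 := by linear_combination hc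
    have : (n:ℕ) = 1 := Nat.cast_injective (R := ℂ) (by simpa using this)
    omega
  have hnp1 : (n:ℂ) + 1 ≠ 0 := by
    have := Nat.cast_add_one_ne_zero (R := ℂ) n
    simpa using this
  set w : ℂ := -(((n:ℂ)-1)/((n:ℂ)+1)) with hw
  have hwne : w ≠ 0 := by
    simp only [hw, neg_ne_zero, div_ne_zero_iff]
    exact ⟨hn1, hnp1⟩
  have hnp : (n:ℂ) * polePt n = Complex.log w / 2 := by
    rw [polePt]
    field_simp
    ring
  set u : ℂ := Complex.exp ((n:ℂ) * polePt n) with hu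
  have hune : u ≠ 0 := Complex.exp_ne_zero _
  have hu2 : u ^ 2 = w := by
    rw [hu, hnp, pow_two, ← Complex.exp_add]
    rw [show Complex.log w / 2 + Complex.log w / 2 = Complex.log w by ring]
    exact Complex.exp_log hwne
  rw [Complex.exp_neg, ← hu]
  have key : ((n:ℂ)+1) * u^2 + ((n:ℂ)-1) = 0 := by
    rw [hu2, hw]; field_simp; ring
  field_simp
  linear_combination key

lemma polePt_norm_le {n : ℕ} (hn : 2 ≤ n) : ‖polePt n‖ ≤ 6 / n := by
  have hnR : (0:ℝ) < n := by positivity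
  have hn1 : (1:ℝ) ≤ (n:ℝ) - 1 := by
    have : (2:ℝ) ≤ n := by exact_mod_cast hn
    linarith
  set w : ℂ := -(((n:ℂ)-1)/((n:ℂ)+1)) with hw
  have habs : ‖w‖ = ((n:ℝ)-1)/((n:ℝ)+1) := by
    rw [hw]
    rw [norm_neg, norm_div]
    congr 1
    · rw [show (n:ℂ) - 1 = ((((n:ℝ) - 1) : ℝ) : ℂ) by push_cast; ring]
      rw [Complex.norm_real, Real.norm_of_nonneg (by linarith)]
    · rw [show (n:ℂ) + 1 = ((((n:ℝ) + 1) : ℝ) : ℂ) by push_cast; ring]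
      rw [Complex.norm_real, Real.norm_of_nonneg (by linarith)]
  have hlog : ‖Complex.log w‖ ≤ 2 + Real.pi := by
    have h1 : ‖Complex.log w‖ ≤ |(Complex.log w).re| + |(Complex.log w).im| :=
      Complex.norm_le_abs_re_add_abs_im _
    rw [Complex.log_re, Complex.log_im] at h1
    have harg : |w.arg| ≤ Real.pi := Complex.abs_arg_le_pi w
    have hre : |Real.log ‖w‖| ≤ 2 := by
      rw [habs]
      have hpos : (0:ℝ) < ((n:ℝ)-1)/((n:ℝ)+1) := by positivity
      have hle1 : ((n:ℝ)-1)/((n:ℝ)+1) ≤ 1 := by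
        rw [div_le_one (by linarith)]; linarith
      have hge : (1:ℝ)/3 ≤ ((n:ℝ)-1)/((n:ℝ)+1) := by
        rw [div_le_div_iff₀ (by norm_num) (by linarith)]
        have : (2:ℝ) ≤ n := by exact_mod_cast hn
        linarith
      have hlogle : Real.log (((n:ℝ)-1)/((n:ℝ)+1)) ≤ 0 :=
        Real.log_nonpos (le_of_lt hpos) hle1
      have hlogge : Real.log ((1:ℝ)/3) ≤ Real.log (((n:ℝ)-1)/((n:ℝ)+1)) :=
        Real.log_le_log (by norm_num) hge
      have h3 : Real.log ((1:ℝ)/3) = - Real.log 3 := by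
        rw [one_div, Real.log_inv]
      have hl3 : Real.log 3 ≤ 2 := by
        have := Real.log_le_sub_one_of_pos (show (0:ℝ) < 3 by norm_num)
        linarith
      rw [abs_le]
      constructor <;> [linarith; linarith]
    calc ‖Complex.log w‖ ≤ _ := h1
      _ ≤ 2 + Real.pi := by linarith
  have hpi : Real.pi ≤ 4 := by linarith [Real.pi_le_four]
  have : ‖polePt n‖ = ‖Complex.log w‖ / (2 * n) := by
    rw [polePt, ← hw, norm_div]
    congr 1
    rw [show (2 * (n:ℂ)) = (((2 * (n:ℝ)) : ℝ) : ℂ) by push_cast; ring]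
    rw [Complex.norm_real, Real.norm_of_nonneg (by positivity)]
  rw [this]
  rw [div_le_div_iff₀ (by positivity) hnR]
  nlinarith


lemma chordal_far (w v : ℂ) (hw : ‖w‖ ≤ 2) (hv : 2 / Real.sqrt (1 + ‖v‖^2) < 1/100) :
    ¬ (2 * ‖w - v‖ / (Real.sqrt (1+‖w‖^2) * Real.sqrt (1+‖v‖^2)) < 1/100) := by
  set a := ‖w‖ with ha
  set b := ‖v‖ with hb
  have ha0 : 0 ≤ a := norm_nonneg w
  have hb0 : 0 ≤ b := norm_nonneg v
  set Sw := Real.sqrt (1 + a^2) with hSw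
  set Sv := Real.sqrt (1 + b^2) with hSv
  have hSw0 : 0 ≤ Sw := Real.sqrt_nonneg _
  have hSv0 : 0 ≤ Sv := Real.sqrt_nonneg _
  have hSw2 : Sw^2 = 1 + a^2 := Real.sq_sqrt (by positivity)
  have hSv2 : Sv^2 = 1 + b^2 := Real.sq_sqrt (by positivity)
  have hSvpos : 0 < Sv := by nlinarith
  have hSv200 : 200 < Sv := by
    rw [div_lt_iff₀ hSvpos] at hv; linarith
  have hb199 : 199 < b := by nlinarith
  have hSw3 : Sw ≤ 3 := by nlinarith
  have hSw1 : 1 ≤ Sw := by nlinarith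
  have hSvb : Sv ≤ 1 + b := by nlinarith
  have hwv : b - 2 ≤ ‖w - v‖ := by
    have h1 : b - a ≤ ‖v - w‖ := by
      have := norm_sub_norm_le v w; linarith
    rw [norm_sub_rev] at h1; linarith
  push_neg
  rw [le_div_iff₀ (by positivity)]
  have hmul : Sw * Sv ≤ 3 * (1 + b) := by nlinarith
  nlinarith

set_option maxHeartbeats 1000000


/-- With `fₙ(z) = ((n+1)/(2n)) eⁿᶻ + ((n−1)/(2n)) e⁻ⁿᶻ` and `hₙ = 1/fₙ`, the family
`H = {hₙ : n ≥ 2}` of meromorphic functions on the unit disk is not normal, yet every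
`hₙ` satisfies `hₙ(z) ∈ {1, −1} ⟹ hₙ′(z) ∈ {1, −1}` and has no zeros (so all its zeros
are trivially multiple). -/
theorem reciprocal_family_counterexample (f : ℕ → ℂ → ℂ) (h : ℕ → ℂ → CSphere)
    (hf : ∀ n : ℕ, ∀ z : ℂ, f n z =
      (((n : ℂ) + 1) / (2 * (n : ℂ))) * Complex.exp ((n : ℂ) * z) +
      (((n : ℂ) - 1) / (2 * (n : ℂ))) * Complex.exp (-((n : ℂ) * z)))
    (hh : ∀ n : ℕ, ∀ z : ℂ, h n z = if f n z = 0 then CSphere.infty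
      else CSphere.finite (f n z)⁻¹) :
    ¬ NormalOn {g : ℂ → CSphere | ∃ n : ℕ, 2 ≤ n ∧ g = h n} (Metric.ball (0 : ℂ) 1) ∧
    (∀ n : ℕ, 2 ≤ n → ∀ z ∈ Metric.ball (0 : ℂ) 1,
      (h n z = CSphere.finite 1 ∨ h n z = CSphere.finite (-1)) →
      (sphDeriv (h n) z = CSphere.finite 1 ∨ sphDeriv (h n) z = CSphere.finite (-1))) ∧
    (∀ n : ℕ, 2 ≤ n → ∀ z ∈ Metric.ball (0 : ℂ) 1, h n z ≠ CSphere.finite 0) := by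
  have hn0 : ∀ n : ℕ, 2 ≤ n → (n:ℂ) ≠ 0 := fun n hn => Nat.cast_ne_zero.mpr (by omega)
  have hfe : ∀ n : ℕ, f n = fun z : ℂ =>
      (((n : ℂ) + 1) / (2 * (n : ℂ))) * Complex.exp ((n : ℂ) * z) +
      (((n : ℂ) - 1) / (2 * (n : ℂ))) * Complex.exp (-((n : ℂ) * z)) := fun n => funext (hf n)
  have hfd : ∀ n : ℕ, Differentiable ℂ (f n) := by
    intro n; rw [hfe n]; fun_prop
  have hfzero : ∀ n : ℕ, 2 ≤ n → f n (polePt n) = 0 := by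
    intro n hn; rw [hf]; exact polePt_f_eq_zero hn
  have hf0 : ∀ n : ℕ, 2 ≤ n → f n 0 = 1 := by
    intro n hn
    rw [hf]
    simp only [mul_zero, neg_zero, Complex.exp_zero, mul_one]
    field_simp [hn0 n hn]
    ring
  refine ⟨?_, ?_, ?_⟩
  · -- not normal
    intro hnorm
    obtain ⟨φ, hφ, g, hconv⟩ := hnorm (fun n => h (n+2)) (fun n => ⟨n+2, by omega, rfl⟩)
    set ψ : ℕ → ℕ := fun n => φ n + 2 with hψdef
    have hψ2 : ∀ n, 2 ≤ ψ n := fun n => Nat.le_add_left 2 (φ n)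
    have hψge : ∀ n, n ≤ ψ n := fun n => le_trans hφ.le_apply (Nat.le_add_right _ 2)
    have hKsub : Metric.closedBall (0:ℂ) (1/2) ⊆ Metric.ball (0:ℂ) 1 :=
      Metric.closedBall_subset_ball (by norm_num)
    have hN' := hconv (Metric.closedBall 0 (1/2)) hKsub (isCompact_closedBall _ _)
      (1/100) (by norm_num)
    rw [eventually_atTop] at hN'
    obtain ⟨N, hN⟩ := hN'
    set A := ψ N with hA
    have hA2 : 2 ≤ A := hψ2 N
    -- the pole points tend to 0
    have hpnorm : ∀ m : ℕ, 2 ≤ m → ‖polePt (ψ m)‖ ≤ 6 / m := by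
      intro m hm
      refine le_trans (polePt_norm_le (hψ2 m)) ?_
      have h1 : (m:ℝ) ≤ (ψ m : ℝ) := by exact_mod_cast hψge m
      have h2 : (0:ℝ) < m := by positivity
      apply div_le_div_of_nonneg_left (by norm_num) h2 h1
    have hptend : Tendsto (fun m => polePt (ψ m)) atTop (𝓝 0) := by
      rw [tendsto_zero_iff_norm_tendsto_zero]
      apply squeeze_zero' (Eventually.of_forall fun m => norm_nonneg _)
        (eventually_atTop.mpr ⟨2, fun m hm => hpnorm m hm⟩)
      exact tendsto_const_div_atTop_nhds_zero_nat 6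
    have hftend : Tendsto (fun m => f A (polePt (ψ m))) atTop (𝓝 1) := by
      have hc : ContinuousAt (f A) 0 := ((hfd A).continuous).continuousAt
      have := hc.tendsto.comp hptend
      rwa [hf0 A hA2] at this
    have hev1 : ∀ᶠ m in atTop, (1:ℝ)/2 ≤ ‖f A (polePt (ψ m))‖ := by
      filter_upwards [hftend.eventually (Metric.ball_mem_nhds (1:ℂ) (by norm_num : (0:ℝ) < 1/2))]
        with m hm
      rw [dist_eq_norm] at hm
      have := norm_sub_norm_le (1:ℂ) (f A (polePt (ψ m)))
      rw [norm_one, norm_sub_rev] at this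
      linarith
    have hev2 : ∀ᶠ m in atTop, polePt (ψ m) ∈ Metric.closedBall (0:ℂ) (1/2) := by
      filter_upwards [eventually_ge_atTop 12] with m hm
      rw [Metric.mem_closedBall, dist_zero_right]
      refine le_trans (hpnorm m (by omega)) ?_
      rw [div_le_div_iff₀ (by positivity) (by norm_num)]
      have hm' : (12:ℝ) ≤ (m:ℝ) := by exact_mod_cast hm
      push_cast
      linarith
    obtain ⟨m, hm1, hm2, hmN⟩ := (hev1.and (hev2.and (eventually_ge_atTop N))).exists
    set p := polePt (ψ m) with hp
    -- h (ψ m) has a pole at p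
    have hpole : h (ψ m) p = CSphere.infty := by
      rw [hh, if_pos (hfzero (ψ m) (hψ2 m))]
    have hfAne : f A p ≠ 0 := by
      intro hc; rw [hc] at hm1; simp at hm1; linarith
    have hAval : h A p = CSphere.finite (f A p)⁻¹ := by rw [hh, if_neg hfAne]
    have hwle : ‖(f A p)⁻¹‖ ≤ 2 := by
      rw [norm_inv]
      rw [inv_le_comm₀ (by positivity) (by norm_num)]
      linarith
    have h1 := hN m hmN p hm2
    have h2 := hN N le_rfl p hm2
    simp only [show h (φ m + 2) p = CSphere.infty from hpole] at h1
    have h2' : (h A p).sphDist (g p) < 1/100 := h2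
    rw [hAval] at h2'
    cases hgp : g p with
    | finite v =>
        rw [hgp] at h1 h2'
        simp only [sphDist] at h1 h2'
        exact chordal_far _ v hwle h1 h2'
    | infty =>
        rw [hgp] at h2'
        simp only [sphDist] at h2'
        have hs3 : Real.sqrt (1 + ‖(f A p)⁻¹‖^2) ≤ 3 := by
          have h9 : (1:ℝ) + ‖(f A p)⁻¹‖^2 ≤ 9 := by nlinarith [norm_nonneg (f A p)⁻¹]
          nlinarith [Real.sq_sqrt (show (0:ℝ) ≤ 1 + ‖(f A p)⁻¹‖^2 by positivity),
            Real.sqrt_nonneg (1 + ‖(f A p)⁻¹‖^2)]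
        have hspos : 0 < Real.sqrt (1 + ‖(f A p)⁻¹‖^2) := by positivity
        rw [div_lt_iff₀ hspos] at h2'
        linarith
  · -- value sharing
    intro n hn z hz hval
    have hnne : (n:ℂ) ≠ 0 := hn0 n hn
    have hfz : f n z ≠ 0 := by
      intro hc
      rw [hh, if_pos hc] at hval
      rcases hval with hv | hv <;> exact CSphere.noConfusion hv
    have hs : f n z = 1 ∨ f n z = -1 := by
      rw [hh, if_neg hfz] at hval
      rcases hval with hv | hv
      · left
        have h1 : (f n z)⁻¹ = 1 := by injection hv
        rwa [inv_eq_one] at h1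
      · right
        have h1 : (f n z)⁻¹ = -1 := by injection hv
        rw [← inv_inv (f n z), h1]; norm_num
    have hs2 : (f n z)^2 = 1 := by rcases hs with h' | h' <;> rw [h'] <;> ring
    have hev : ∀ᶠ w in 𝓝 z, h n w = CSphere.finite ((f n w)⁻¹) := by
      filter_upwards [((hfd n).continuous.continuousAt).eventually_ne hfz] with w hw
      rw [hh, if_neg hw]
    have hex : ∃ g0 : ℂ → ℂ, AnalyticAt ℂ g0 z ∧ ∀ᶠ w in 𝓝 z, h n w = CSphere.finite (g0 w) :=
      ⟨fun w => (f n w)⁻¹, ((hfd n).analyticAt z).inv hfz, hev⟩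
    rw [sphDeriv, dif_pos hex]
    have hgeq : hex.choose =ᶠ[𝓝 z] fun w => (f n w)⁻¹ := by
      filter_upwards [hex.choose_spec.2, hev] with w hw1 hw2
      have h3 := hw1.symm.trans hw2
      injection h3
    -- derivative of f n
    set u : ℂ := Complex.exp ((n:ℂ) * z) with hu
    have hune : u ≠ 0 := Complex.exp_ne_zero _
    have e1 : HasDerivAt (fun w : ℂ => (n:ℂ) * w) (n:ℂ) z := by
      simpa using (hasDerivAt_id z).const_mul (n:ℂ)
    have e2 := e1.cexp
    have e4 := e1.neg.cexp
    set c1 : ℂ := ((n:ℂ) + 1) / (2 * (n:ℂ)) with hc1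
    set c2 : ℂ := ((n:ℂ) - 1) / (2 * (n:ℂ)) with hc2
    set D : ℂ := c1 * (Complex.exp ((n:ℂ)*z) * n) + c2 * (Complex.exp (-((n:ℂ)*z)) * (-(n:ℂ))) with hD
    have hDu : D = c1 * (u * n) + c2 * (u⁻¹ * (-(n:ℂ))) := by
      rw [hD, ← hu, Complex.exp_neg]
    have eF : HasDerivAt (f n) D z := by
      rw [hfe n, hD]
      exact (HasDerivAt.const_mul c1 e2).add (HasDerivAt.const_mul c2 e4)
    have einv := eF.inv hfz
    have hder : deriv hex.choose z = -D / f n z ^ 2 := by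
      rw [hgeq.deriv_eq]; exact einv.deriv
    rw [hder, hs2, div_one]
    -- (f n z) = c1 u + c2 u⁻¹
    have hsval : c1 * u + c2 * u⁻¹ = f n z := by
      rw [hf n z, ← hu, Complex.exp_neg]
    have hD2 : D^2 = 1 := by
      have hkey : 2*(n:ℂ) * (((n:ℂ)+1) * u^2 + ((n:ℂ)-1)) = 4*(n:ℂ)^2 * u * f n z := by
        have h5 := hsval
        rw [hc1, hc2] at h5
        field_simp at h5
        linear_combination (2*(n:ℂ)) * h5
      have hDeq : 2 * u * D = ((n:ℂ)+1) * u^2 - ((n:ℂ)-1) := by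
        rw [hDu, hc1, hc2]
        field_simp
        ring
      have h6 : (2*(n:ℂ))^2 * ((2*u*D)^2 - (2*u)^2) = 0 := by
        rw [hDeq]
        linear_combination (2*(n:ℂ)*(((n:ℂ)+1)*u^2 + ((n:ℂ)-1)) + 4*(n:ℂ)^2*u*f n z) * hkey
          + 16*(n:ℂ)^4*u^2 * hs2
      have h7 : (16*(n:ℂ)^2*u^2) * (D^2 - 1) = 0 := by linear_combination h6
      have h8 : (16*(n:ℂ)^2*u^2) ≠ 0 :=
        mul_ne_zero (mul_ne_zero (by norm_num) (pow_ne_zero 2 hnne)) (pow_ne_zero 2 hune)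
      have h9 := (mul_eq_zero.mp h7).resolve_left h8
      linear_combination h9
    have hfac : (-D - 1) * (-D + 1) = 0 := by linear_combination hD2
    rcases mul_eq_zero.mp hfac with h9 | h9
    · left
      rw [show -D = 1 by linear_combination h9]
    · right
      rw [show -D = -1 by linear_combination h9]
  · -- no zeros
    intro n hn z hz
    rw [hh]
    split_ifs with hc
    · exact fun h' => CSphere.noConfusion h'
    · intro h'
      have h1 : (f n z)⁻¹ = 0 := by injection h'
      exact hc (inv_eq_zero.mp h1)
end
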